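/- arXiv:1103.3817 — 4 statements merged into one kernel-verified Lean document; each statement's English description precedes it below -/
import Mathlib

section
/- Let q ∈ L²([0,1],ℝ) and define f(t) = f(0) + ∫₀ᵗ q(s)|q(s)| ds. Then f is absolutely continuous and its square-root velocity function equals q almost everywhere, i.e., f'(t)/√|f'(t)| = q(t) for a.e. t. -/
open MeasureTheory Set intervalIntegral

noncomputable def Q (x : ℝ) : ℝ := x / Real.sqrt |x|

/-- `γ` is an orientation-preserving diffeomorphism of `[0,1]` fixing the endpoints,
with (positive, continuous) derivative `γd`. -/
def IsWarping (γ γd : ℝ → ℝ) : Prop :=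
  γ 0 = 0 ∧ γ 1 = 1 ∧ Set.MapsTo γ (Set.Icc 0 1) (Set.Icc 0 1) ∧
  (∀ t ∈ Set.Icc (0:ℝ) 1, HasDerivAt γ (γd t) t) ∧
  (∀ t ∈ Set.Icc (0:ℝ) 1, 0 < γd t) ∧
  ContinuousOn γd (Set.Icc 0 1)

section Aux

open Metric Filter

lemma ftc_lebesgue (g : ℝ → ℝ) (hg : Integrable g) :
    ∀ᵐ x : ℝ, HasDerivAt (fun t => ∫ s in (0:ℝ)..t, g s) (g x) x := by
  filter_upwards [IsUnifLocDoublingMeasure.ae_tendsto_average_norm_sub volume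
    hg.locallyIntegrable 1] with x hx
  rw [hasDerivAt_iff_tendsto_slope]
  have hδ : Tendsto (fun t : ℝ => |t - x| / 2) (nhdsWithin x {x}ᶜ) (nhdsWithin 0 (Ioi 0)) := by
    apply tendsto_nhdsWithin_iff.2 ⟨?_, ?_⟩
    · have h0 : Tendsto (fun t : ℝ => |t - x| / 2) (nhds x) (nhds (|x - x| / 2)) := by
        exact (((continuous_id.sub continuous_const).abs.div_const 2).tendsto x)
      simpa using h0.mono_left nhdsWithin_le_nhds
    · filter_upwards [self_mem_nhdsWithin] with t ht
      have htx : t - x ≠ 0 := sub_ne_zero.2 ht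
      exact div_pos (abs_pos.2 htx) two_pos
  have key := hx (fun t => (x + t) / 2) (fun t => |t - x| / 2) hδ ?_
  · have hb : ∀ᶠ t in nhdsWithin x {x}ᶜ,
        ‖slope (fun t => ∫ s in (0:ℝ)..t, g s) x t - g x‖ ≤
          ⨍ y in closedBall ((x + t) / 2) (|t - x| / 2), ‖g y - g x‖ := by
      filter_upwards [self_mem_nhdsWithin] with t ht
      have htx : t - x ≠ 0 := sub_ne_zero.2 ht
      have hint : ∀ a b : ℝ, IntervalIntegrable g volume a b :=
        fun a b => hg.intervalIntegrable
      have e1 : (∫ s in (0:ℝ)..t, g s) - (∫ s in (0:ℝ)..x, g s) = ∫ s in x..t, g s :=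
        intervalIntegral.integral_interval_sub_left (hint 0 t) (hint 0 x)
      have h1 : slope (fun t => ∫ s in (0:ℝ)..t, g s) x t - g x
          = (∫ s in x..t, (g s - g x)) / (t - x) := by
        rw [slope_def_field, intervalIntegral.integral_sub (hint x t) intervalIntegrable_const,
          intervalIntegral.integral_const, e1, smul_eq_mul]
        field_simp
      rw [h1]
      have hball : Set.uIoc x t ⊆ closedBall ((x + t) / 2) (|t - x| / 2) := by
        intro y hy
        rw [Real.closedBall_eq_Icc, Set.mem_Icc]
        rcases le_total x t with h | h
        · rw [Set.uIoc_of_le h] at hy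
          rw [abs_of_nonneg (by linarith : (0:ℝ) ≤ t - x)]
          exact ⟨by linarith [hy.1], by linarith [hy.2]⟩
        · rw [Set.uIoc_comm, Set.uIoc_of_le h] at hy
          rw [abs_of_nonpos (by linarith : t - x ≤ 0)]
          exact ⟨by linarith [hy.1], by linarith [hy.2]⟩
      have h2 : ‖∫ s in x..t, (g s - g x)‖ ≤
          ∫ y in closedBall ((x + t) / 2) (|t - x| / 2), ‖g y - g x‖ := by
        refine le_trans intervalIntegral.norm_integral_le_integral_norm_uIoc ?_
        apply setIntegral_mono_set
        · exact (hg.integrableOn.sub (integrableOn_const measure_closedBall_lt_top.ne)).norm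
        · filter_upwards with y using norm_nonneg _
        · exact HasSubset.Subset.eventuallyLE hball
      have hvol : (volume (closedBall ((x + t) / 2) (|t - x| / 2))).toReal = |t - x| := by
        rw [Real.volume_closedBall, ENNReal.toReal_ofReal (by positivity)]
        ring
      rw [setAverage_eq, measureReal_def, hvol, smul_eq_mul, norm_div, Real.norm_eq_abs (t - x),
        inv_mul_eq_div]
      gcongr
    have h0 : ∀ᶠ t in nhdsWithin x {x}ᶜ,
        (0:ℝ) ≤ ‖slope (fun t => ∫ s in (0:ℝ)..t, g s) x t - g x‖ := by
      filter_upwards with t using norm_nonneg _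
    have hz := squeeze_zero' h0 hb key
    have : Tendsto (fun t => slope (fun t => ∫ s in (0:ℝ)..t, g s) x t - g x)
        (nhdsWithin x {x}ᶜ) (nhds 0) := by
      rwa [← tendsto_zero_iff_norm_tendsto_zero] at hz
    have h3 := this.add_const (g x)
    simpa using h3
  · filter_upwards with t
    rw [mem_closedBall, Real.dist_eq, one_mul]
    have h4 : x - (x + t) / 2 = -((t - x) / 2) := by ring
    rw [h4, abs_neg, abs_div, abs_two]

lemma Q_mul_abs (a : ℝ) : Q (a * |a|) = a := by
  unfold Q
  rcases eq_or_ne a 0 with h | h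
  · simp [h]
  · rw [abs_mul, abs_abs, Real.sqrt_mul_self (abs_nonneg a), mul_div_assoc,
      div_self (abs_ne_zero.2 h), mul_one]

end Aux

/-- If `q ∈ L²([0,1])` and `f(t) = f(0) + ∫₀ᵗ q(s)|q(s)| ds`, then `f` is absolutely
continuous (it is an indefinite integral of an integrable derivative `f'`) and its SRVF
equals `q` almost everywhere: `Q(f'(t)) = q(t)` for a.e. `t ∈ [0,1]`. -/
theorem srvf_of_indefinite_integral (q : ℝ → ℝ)
    (hq : MemLp q 2 (volume.restrict (Icc (0:ℝ) 1)))
    (f0 : ℝ) (f : ℝ → ℝ) (hf : f = fun t => f0 + ∫ s in (0:ℝ)..t, q s * |q s|) :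
    ∃ f' : ℝ → ℝ, IntegrableOn f' (Icc (0:ℝ) 1) ∧
      (∀ t ∈ Icc (0:ℝ) 1, f t = f 0 + ∫ s in (0:ℝ)..t, f' s) ∧
      (∀ᵐ t ∂(volume.restrict (Icc (0:ℝ) 1)), HasDerivAt f (f' t) t) ∧
      (∀ᵐ t ∂(volume.restrict (Icc (0:ℝ) 1)), Q (f' t) = q t) := by
  set f' : ℝ → ℝ := fun t => q t * |q t| with hf'
  have hmeas : AEStronglyMeasurable f' (volume.restrict (Icc (0:ℝ) 1)) := by
    exact hq.aestronglyMeasurable.mul hq.aestronglyMeasurable.norm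
  have hIntOn : IntegrableOn f' (Icc (0:ℝ) 1) := by
    refine Integrable.mono' hq.integrable_sq hmeas ?_
    filter_upwards with t
    have : ‖f' t‖ = q t ^ 2 := by
      show ‖q t * |q t|‖ = q t ^ 2
      rw [Real.norm_eq_abs, abs_mul, abs_abs, abs_mul_abs_self, ← sq]
    rw [this]
  refine ⟨f', hIntOn, ?_, ?_, ?_⟩
  · intro t _
    have : f 0 = f0 := by simp [hf]
    simp [hf, this]
  · -- a.e. differentiability
    set g : ℝ → ℝ := (Icc (0:ℝ) 1).indicator f' with hg
    have hgInt : Integrable g := by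
      rw [hg, integrable_indicator_iff measurableSet_Icc]
      exact hIntOn
    have hae := ftc_lebesgue g hgInt
    have haer : ∀ᵐ t ∂(volume.restrict (Icc (0:ℝ) 1)),
        HasDerivAt (fun t => ∫ s in (0:ℝ)..t, g s) (g t) t := ae_restrict_of_ae hae
    have hIoo : ∀ᵐ t ∂(volume.restrict (Icc (0:ℝ) 1)), t ∈ Ioo (0:ℝ) 1 := by
      have hn : (volume.restrict (Icc (0:ℝ) 1)) ({0, 1} : Set ℝ) = 0 := by
        have h2 : volume ({0, 1} : Set ℝ) = 0 := (Set.toFinite _).measure_zero _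
        rw [Measure.restrict_apply' measurableSet_Icc]
        exact measure_mono_null Set.inter_subset_left h2
      have h3 := (measure_eq_zero_iff_ae_notMem).1 hn
      filter_upwards [ae_restrict_mem measurableSet_Icc, h3] with t ht ht2
      simp only [Set.mem_insert_iff, Set.mem_singleton_iff, not_or] at ht2
      exact ⟨lt_of_le_of_ne ht.1 (Ne.symm ht2.1), lt_of_le_of_ne ht.2 ht2.2⟩
    filter_upwards [haer, hIoo] with t ht htIoo
    have hgt : g t = f' t := Set.indicator_of_mem (Set.mem_Icc_of_Ioo htIoo) _
    rw [← hgt]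
    have heq : f =ᶠ[nhds t] fun s => f0 + ∫ u in (0:ℝ)..s, g u := by
      filter_upwards [isOpen_Ioo.mem_nhds htIoo] with s hs
      have : EqOn (fun u => q u * |q u|) g (Set.uIcc 0 s) := by
        intro y hy
        rw [Set.uIcc_of_le hs.1.le] at hy
        have hy1 : y ∈ Icc (0:ℝ) 1 := ⟨hy.1, hy.2.trans hs.2.le⟩
        simp only [hg, hf', Set.indicator_of_mem hy1]
      rw [hf]
      simp only
      rw [intervalIntegral.integral_congr this]
    exact ((ht.const_add f0).congr_of_eventuallyEq heq)
  · filter_upwards with t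
    exact Q_mul_abs (q t)
end

section
/- Let q ∈ L²([0,1],ℝ) be such that the set {t ∈ [0,1] : q(t) = 0} has Lebesgue measure zero, and let c > 0. If γ* ∈ Γ satisfies ‖cq − (q,γ*)‖ ≤ ‖cq − (q,γ)‖ for all γ ∈ Γ, then γ* = γ_id. -/
open MeasureTheory Set intervalIntegral

open scoped ENNReal NNReal

namespace Warp

variable {γ γd : ℝ → ℝ}

lemma contOn (hw : IsWarping γ γd) : ContinuousOn γ (Icc 0 1) :=
  fun t ht => (hw.2.2.2.1 t ht).continuousAt.continuousWithinAt

lemma mono (hw : IsWarping γ γd) : StrictMonoOn γ (Icc 0 1) := by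
  apply strictMonoOn_of_deriv_pos (convex_Icc 0 1) (contOn hw)
  intro x hx
  rw [interior_Icc] at hx
  have hx' : x ∈ Icc (0:ℝ) 1 := Ioo_subset_Icc_self hx
  rw [(hw.2.2.2.1 x hx').deriv]
  exact hw.2.2.2.2.1 x hx'

lemma image (hw : IsWarping γ γd) {t : ℝ} (ht : t ∈ Icc (0:ℝ) 1) :
    γ '' Icc 0 t = Icc 0 (γ t) := by
  have hsub : Icc (0:ℝ) t ⊆ Icc 0 1 := Icc_subset_Icc le_rfl ht.2
  have h0 : (0:ℝ) ∈ Icc (0:ℝ) 1 := ⟨le_rfl, zero_le_one⟩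
  apply Subset.antisymm
  · rintro y ⟨x, hx, rfl⟩
    have hx' := hsub hx
    constructor
    · rw [← hw.1]; exact (mono hw).monotoneOn h0 hx' hx.1
    · exact (mono hw).monotoneOn hx' ht hx.2
  · have := intermediate_value_Icc ht.1 ((contOn hw).mono hsub)
    rwa [hw.1] at this

lemma subst (hw : IsWarping γ γd) {t : ℝ} (ht : t ∈ Icc (0:ℝ) 1) (f : ℝ → ℝ) :
    ∫ x in Icc 0 (γ t), f x = ∫ x in Icc 0 t, γd x * f (γ x) := by
  have hsub : Icc (0:ℝ) t ⊆ Icc 0 1 := Icc_subset_Icc le_rfl ht.2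
  rw [← image hw ht,
    integral_image_eq_integral_abs_deriv_smul measurableSet_Icc
      (fun x hx => (hw.2.2.2.1 x (hsub hx)).hasDerivWithinAt)
      (((mono hw).mono hsub).injOn) f]
  apply setIntegral_congr_fun measurableSet_Icc
  intro x hx
  simp [abs_of_pos (hw.2.2.2.2.1 x (hsub hx))]

lemma integrable (hw : IsWarping γ γd) {f : ℝ → ℝ}
    (hf : IntegrableOn f (Icc 0 1)) :
    IntegrableOn (fun x => γd x * f (γ x)) (Icc 0 1) := by
  have h1 : (1:ℝ) ∈ Icc (0:ℝ) 1 := ⟨zero_le_one, le_rfl⟩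
  have himg : γ '' Icc 0 1 = Icc 0 1 := by rw [image hw h1, hw.2.1]
  have := (integrableOn_image_iff_integrableOn_abs_deriv_smul measurableSet_Icc
      (fun x hx => (hw.2.2.2.1 x hx).hasDerivWithinAt) ((mono hw).injOn) f).1
      (by rwa [himg])
  apply this.congr_fun _ measurableSet_Icc
  intro x hx
  simp [abs_of_pos (hw.2.2.2.2.1 x hx)]

lemma ae_comp (hw : IsWarping γ γd) {p : ℝ → Prop}
    (hp : ∀ᵐ x ∂(volume.restrict (Icc (0:ℝ) 1)), p x) :
    ∀ᵐ x ∂(volume.restrict (Icc (0:ℝ) 1)), p (γ x) := by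
  obtain ⟨N, hNsub, hNm, hNnull⟩ := exists_measurable_superset_of_null hp
  set M : Set ℝ := N ∩ Icc (0:ℝ) 1 with hM
  have hMm : MeasurableSet M := hNm.inter measurableSet_Icc
  have hMnull : volume M = 0 := by
    rwa [Measure.restrict_apply hNm] at hNnull
  have h1 : (1:ℝ) ∈ Icc (0:ℝ) 1 := ⟨zero_le_one, le_rfl⟩
  have himg : γ '' Icc 0 1 = Icc 0 1 := by rw [image hw h1, hw.2.1]
  -- lintegral change of variables
  have hL : ∫⁻ x in Icc (0:ℝ) 1,
      ENNReal.ofReal |γd x| * M.indicator (fun _ => (1:ℝ≥0∞)) (γ x) = 0 := by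
    have := lintegral_image_eq_lintegral_abs_det_fderiv_mul volume measurableSet_Icc
      (fun x hx => ((hw.2.2.2.1 x hx).hasDerivWithinAt).hasFDerivWithinAt)
      ((mono hw).injOn) (M.indicator (fun _ => (1:ℝ≥0∞)))
    simp only [ContinuousLinearMap.det_toSpanSingleton] at this
    rw [← this, himg, lintegral_indicator hMm, setLIntegral_one, Measure.restrict_apply hMm]
    exact measure_mono_null inter_subset_left hMnull
  have hγae : AEMeasurable γ (volume.restrict (Icc (0:ℝ) 1)) :=
    (contOn hw).aemeasurable measurableSet_Icc
  have hFm : AEMeasurable (fun x =>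
      ENNReal.ofReal |γd x| * M.indicator (fun _ => (1:ℝ≥0∞)) (γ x))
      (volume.restrict (Icc (0:ℝ) 1)) := by
    apply AEMeasurable.mul
    · exact ENNReal.measurable_ofReal.comp_aemeasurable
        (((continuous_abs.comp_continuousOn hw.2.2.2.2.2)).aemeasurable measurableSet_Icc)
    · exact (measurable_const.indicator hMm).comp_aemeasurable hγae
  have h0 := (lintegral_eq_zero_iff' hFm).1 hL
  filter_upwards [h0, ae_restrict_mem measurableSet_Icc] with x hx hxI
  have hpos := hw.2.2.2.2.1 x hxI
  have hne : ENNReal.ofReal |γd x| ≠ 0 := by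
    simp [abs_of_pos hpos, hpos.le, hpos, ENNReal.ofReal_eq_zero, not_le]
  have : M.indicator (fun _ => (1:ℝ≥0∞)) (γ x) = 0 := by
    by_contra h
    exact hne (by simpa [h] using mul_eq_zero.1 hx |>.resolve_right h)
  have hγM : γ x ∉ M := by
    intro hmem
    rw [indicator_of_mem hmem] at this
    exact one_ne_zero this
  have hγI : γ x ∈ Icc (0:ℝ) 1 := hw.2.2.1 hxI
  by_contra hpx
  exact hγM ⟨hNsub hpx, hγI⟩

end Warp

/-- If `q ∈ L²([0,1])` vanishes only on a Lebesgue-null set and `c > 0`, then any warping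
`γ*` minimizing `γ ↦ ‖c q − (q,γ)‖` over all warpings must be the identity on `[0,1]`. -/
theorem unique_minimizer_is_identity (q : ℝ → ℝ) (c : ℝ) (hc : 0 < c)
    (hq : MemLp q 2 (volume.restrict (Icc (0:ℝ) 1)))
    (hzero : volume {t ∈ Icc (0:ℝ) 1 | q t = 0} = 0)
    (γs γsd : ℝ → ℝ) (hws : IsWarping γs γsd)
    (hmin : ∀ γ γd : ℝ → ℝ, IsWarping γ γd →
      (∫ t in (0:ℝ)..1, (c * q t - q (γs t) * Real.sqrt (γsd t))^2)
        ≤ ∫ t in (0:ℝ)..1, (c * q t - q (γ t) * Real.sqrt (γd t))^2) :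
    ∀ t ∈ Icc (0:ℝ) 1, γs t = t := by
  set μ := volume.restrict (Icc (0:ℝ) 1) with hμ
  set g : ℝ → ℝ := fun t => q (γs t) * Real.sqrt (γsd t) with hg_def
  have hpos := hws.2.2.2.2.1
  have hcd := hws.2.2.2.2.2
  -- measurability of g
  have hqγ : AEStronglyMeasurable (fun x => q (γs x)) μ := by
    obtain ⟨q', hq'm, hq'ae⟩ := hq.aestronglyMeasurable
    have hcomp : ∀ᵐ x ∂μ, q (γs x) = q' (γs x) := Warp.ae_comp hws hq'ae
    have hγae : AEMeasurable γs μ := (Warp.contOn hws).aemeasurable measurableSet_Icc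
    exact ((hq'm.measurable.comp_aemeasurable hγae).aestronglyMeasurable).congr
      (Filter.EventuallyEq.symm hcomp)
  have hsqrt : AEStronglyMeasurable (fun x => Real.sqrt (γsd x)) μ :=
    (Real.continuous_sqrt.comp_continuousOn hcd).aestronglyMeasurable measurableSet_Icc
  have hgm : AEStronglyMeasurable g μ := hqγ.mul hsqrt
  -- integrability of squares
  have hq2 : IntegrableOn (fun x => q x ^ 2) (Icc (0:ℝ) 1) := hq.integrable_sq
  have hg2eqOn : EqOn (fun x => g x ^ 2) (fun x => γsd x * q (γs x) ^ 2) (Icc (0:ℝ) 1) := by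
    intro x hx
    simp only [hg_def, mul_pow, Real.sq_sqrt (hpos x hx).le]
    ring
  have hg2 : IntegrableOn (fun x => g x ^ 2) (Icc (0:ℝ) 1) :=
    (Warp.integrable hws hq2).congr_fun (fun x hx => (hg2eqOn hx).symm) measurableSet_Icc
  have hg2' : MemLp g 2 μ := (memLp_two_iff_integrable_sq hgm).2 hg2
  -- ∫ g² = ∫ q²
  have h1mem : (1:ℝ) ∈ Icc (0:ℝ) 1 := ⟨zero_le_one, le_rfl⟩
  have hA : ∫ x in Icc (0:ℝ) 1, g x ^ 2 = ∫ x in Icc (0:ℝ) 1, q x ^ 2 := by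
    rw [setIntegral_congr_fun measurableSet_Icc hg2eqOn]
    have := Warp.subst hws h1mem (fun x => q x ^ 2)
    rw [hws.2.1] at this
    exact this.symm
  -- minimality against identity
  have hid : IsWarping id (fun _ => 1) :=
    ⟨rfl, rfl, fun t ht => ht, fun t _ => hasDerivAt_id t, fun _ _ => one_pos,
      continuousOn_const⟩
  have hmin' := hmin id (fun _ => 1) hid
  simp only [id_eq, Real.sqrt_one, mul_one] at hmin'
  have hIcc : ∀ f : ℝ → ℝ, ∫ t in (0:ℝ)..1, f t = ∫ t in Icc (0:ℝ) 1, f t := by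
    intro f
    rw [intervalIntegral.integral_of_le zero_le_one, ← integral_Icc_eq_integral_Ioc]
  rw [hIcc, hIcc] at hmin'
  -- Memℒp combinations
  have hcq : MemLp (fun x => c * q x) 2 μ := hq.const_mul c
  have e1 : Integrable (fun x => (c * q x - g x) ^ 2) μ := (hcq.sub hg2').integrable_sq
  have e2 : Integrable (fun x => (c * q x - q x) ^ 2) μ := (hcq.sub hq).integrable_sq
  have e3 : Integrable (fun x => (q x - g x) ^ 2) μ := (hq.sub hg2').integrable_sq
  -- key inequality : ∫ (q-g)² = 0
  have hzero2 : ∫ x in Icc (0:ℝ) 1, (q x - g x) ^ 2 = 0 := by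
    have hnonneg : 0 ≤ ∫ x in Icc (0:ℝ) 1, (q x - g x) ^ 2 :=
      setIntegral_nonneg measurableSet_Icc fun x _ => sq_nonneg _
    have hexp : ∀ x : ℝ, c * (q x - g x) ^ 2 =
        ((c * q x - g x) ^ 2 - (c * q x - q x) ^ 2) + (c - 1) * (g x ^ 2 - q x ^ 2) := by
      intro x; ring
    have hsplit : ∫ x in Icc (0:ℝ) 1, c * (q x - g x) ^ 2 =
        ((∫ x in Icc (0:ℝ) 1, (c * q x - g x) ^ 2) -
          ∫ x in Icc (0:ℝ) 1, (c * q x - q x) ^ 2) +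
        (c - 1) * ((∫ x in Icc (0:ℝ) 1, g x ^ 2) - ∫ x in Icc (0:ℝ) 1, q x ^ 2) := by
      have i1 : Integrable (fun x => (c * q x - g x) ^ 2 - (c * q x - q x) ^ 2) μ :=
        e1.sub e2
      have i2 : Integrable (fun x => (c - 1) * (g x ^ 2 - q x ^ 2)) μ :=
        (hg2.sub hq2).const_mul (c - 1)
      simp_rw [hexp]
      rw [integral_add i1 i2, integral_sub e1 e2, MeasureTheory.integral_const_mul,
        integral_sub hg2 hq2]
    rw [MeasureTheory.integral_const_mul] at hsplit
    have hle : c * ∫ x in Icc (0:ℝ) 1, (q x - g x) ^ 2 ≤ 0 := by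
      rw [hsplit, hA]
      simp only [sub_self, mul_zero, add_zero]
      linarith [hmin']
    nlinarith
  have haeeq : ∀ᵐ x ∂μ, q x = g x := by
    have := (integral_eq_zero_iff_of_nonneg (fun x => sq_nonneg (q x - g x)) e3).1 hzero2
    filter_upwards [this] with x hx
    have : q x - g x = 0 := by
      have := hx
      simpa [pow_eq_zero_iff] using hx
    linarith
  have hkey : ∀ᵐ x ∂μ, q x ^ 2 = γsd x * q (γs x) ^ 2 := by
    filter_upwards [haeeq, ae_restrict_mem measurableSet_Icc] with x hx hxI
    rw [hx]
    exact hg2eqOn hxI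
  -- F equality
  have hF : ∀ t ∈ Icc (0:ℝ) 1, (∫ x in Icc 0 (γs t), q x ^ 2) = ∫ x in Icc 0 t, q x ^ 2 := by
    intro t ht
    rw [Warp.subst hws ht (fun x => q x ^ 2)]
    apply MeasureTheory.integral_congr_ae
    have hmono : volume.restrict (Icc (0:ℝ) t) ≤ μ :=
      Measure.restrict_mono (Icc_subset_Icc le_rfl ht.2) le_rfl
    have h' : ∀ᵐ x ∂(volume.restrict (Icc (0:ℝ) t)), q x ^ 2 = γsd x * q (γs x) ^ 2 :=
      ae_mono hmono hkey
    filter_upwards [h'] with x hx using hx.symm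
  -- positivity on subintervals
  have hposint : ∀ a b : ℝ, 0 ≤ a → a < b → b ≤ 1 → 0 < ∫ x in Ioc a b, q x ^ 2 := by
    intro a b ha hab hb1
    have hsubI : Ioc a b ⊆ Icc (0:ℝ) 1 := fun x hx => ⟨ha.trans hx.1.le, hx.2.trans hb1⟩
    have hint : IntegrableOn (fun x => q x ^ 2) (Ioc a b) := hq2.mono_set hsubI
    rw [setIntegral_pos_iff_support_of_nonneg_ae
      (Filter.Eventually.of_forall fun x => sq_nonneg _) hint]
    have hsup : Ioc a b \ {t ∈ Icc (0:ℝ) 1 | q t = 0} ⊆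
        Function.support (fun x => q x ^ 2) ∩ Ioc a b := by
      rintro x ⟨hx1, hx2⟩
      refine ⟨pow_ne_zero 2 fun h => hx2 ⟨hsubI hx1, h⟩, hx1⟩
    calc (0:ℝ≥0∞) < volume (Ioc a b) := by
          rw [Real.volume_Ioc]
          simp [hab, sub_pos]
      _ = volume (Ioc a b \ {t ∈ Icc (0:ℝ) 1 | q t = 0}) := (measure_diff_null hzero).symm
      _ ≤ volume (Function.support (fun x => q x ^ 2) ∩ Ioc a b) := measure_mono hsup
  -- splitting
  have hsplitInt : ∀ a b : ℝ, 0 ≤ a → a ≤ b → b ≤ 1 →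
      (∫ x in Icc (0:ℝ) b, q x ^ 2) =
        (∫ x in Icc (0:ℝ) a, q x ^ 2) + ∫ x in Ioc a b, q x ^ 2 := by
    intro a b ha hab hb1
    rw [← Icc_union_Ioc_eq_Icc ha hab]
    apply setIntegral_union
    · exact Set.disjoint_left.mpr fun x hx hx' => absurd hx.2 (not_le.mpr hx'.1)
    · exact measurableSet_Ioc
    · exact hq2.mono_set (Icc_subset_Icc le_rfl (hab.trans hb1))
    · exact hq2.mono_set fun x hx => ⟨ha.trans hx.1.le, hx.2.trans hb1⟩
  -- conclusion
  intro t ht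
  by_contra hne
  have hγt : γs t ∈ Icc (0:ℝ) 1 := hws.2.2.1 ht
  have hFt := hF t ht
  rcases lt_or_gt_of_ne hne with hlt | hgt
  · have hp := hposint (γs t) t hγt.1 hlt ht.2
    have hs := hsplitInt (γs t) t hγt.1 hlt.le ht.2
    rw [hFt] at hs
    linarith
  · have hp := hposint t (γs t) ht.1 hgt hγt.2
    have hs := hsplitInt t (γs t) ht.1 hgt.le hγt.2
    rw [hFt] at hs
    linarith
end

section
/- Let q ∈ L²([0,1],ℝ) with {t : q(t) = 0} of measure zero and let γ* ∈ Γ satisfy q(t) = q(γ*(t))√(γ*'(t)) for almost every t. Then γ* = γ_id. -/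
open MeasureTheory Set intervalIntegral

/-- If `q ∈ L²([0,1])` vanishes only on a null set and a warping `γ*` satisfies
`q(t) = q(γ*(t))·√(γ*'(t))` for a.e. `t ∈ [0,1]`, then `γ*` is the identity on `[0,1]`. -/
theorem fixed_point_warping_is_identity (q : ℝ → ℝ)
    (hq : MemLp q 2 (volume.restrict (Icc (0:ℝ) 1)))
    (hzero : volume {t ∈ Icc (0:ℝ) 1 | q t = 0} = 0)
    (γs γsd : ℝ → ℝ) (hws : IsWarping γs γsd)
    (hfix : ∀ᵐ t ∂(volume.restrict (Icc (0:ℝ) 1)),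
      q t = q (γs t) * Real.sqrt (γsd t)) :
    ∀ t ∈ Icc (0:ℝ) 1, γs t = t := by
  obtain ⟨h0, h1, hmaps, hderiv, hpos, hcont⟩ := hws
  have hγcont : ContinuousOn γs (Icc 0 1) := fun x hx =>
    (hderiv x hx).continuousAt.continuousWithinAt
  have hmono : StrictMonoOn γs (Icc 0 1) := by
    apply strictMonoOn_of_deriv_pos (convex_Icc 0 1) hγcont
    intro x hx
    rw [interior_Icc] at hx
    have hx' : x ∈ Icc (0:ℝ) 1 := Ioo_subset_Icc_self hx
    rw [(hderiv x hx').deriv]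
    exact hpos x hx'
  set q2 : ℝ → ℝ := fun x => q x ^ 2 with hq2
  have hq2int : IntegrableOn q2 (Icc 0 1) := hq.integrable_sq
  set F : ℝ → ℝ := fun t => ∫ x in Icc 0 t, q2 x with hF
  -- F is strictly monotone on [0,1]
  have hFmono : StrictMonoOn F (Icc 0 1) := by
    intro a ha b hb hab
    have hunion : Icc (0:ℝ) a ∪ Ioc a b = Icc 0 b := Icc_union_Ioc_eq_Icc ha.1 hab.le
    have hdisj : Disjoint (Icc (0:ℝ) a) (Ioc a b) := by
      apply Set.disjoint_left.mpr
      intro x hx1 hx2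
      exact absurd hx1.2 (not_le.mpr hx2.1)
    have hint1 : IntegrableOn q2 (Icc 0 a) :=
      hq2int.mono_set (Icc_subset_Icc_right ha.2)
    have hint2 : IntegrableOn q2 (Ioc a b) :=
      hq2int.mono_set (fun x hx => ⟨ha.1.trans hx.1.le, hx.2.trans hb.2⟩)
    have hFb : F b = F a + ∫ x in Ioc a b, q2 x := by
      rw [hF]
      simp only
      rw [← hunion, setIntegral_union hdisj measurableSet_Ioc hint1 hint2]
    have hposint : 0 < ∫ x in Ioc a b, q2 x := by
      rw [setIntegral_pos_iff_support_of_nonneg_ae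
        (Filter.Eventually.of_forall (fun x => sq_nonneg _)) hint2]
      have hsub : Ioc a b \ Function.support q2 ⊆ {t ∈ Icc (0:ℝ) 1 | q t = 0} := by
        intro x ⟨hx1, hx2⟩
        refine ⟨⟨ha.1.trans hx1.1.le, hx1.2.trans hb.2⟩, ?_⟩
        have := Function.notMem_support.mp hx2
        exact pow_eq_zero_iff (n := 2) (by norm_num) |>.mp this
      have hnull : volume (Ioc a b \ Function.support q2) = 0 :=
        measure_mono_null hsub hzero
      have hle : volume (Ioc a b) ≤ volume (Function.support q2 ∩ Ioc a b) := by
        calc volume (Ioc a b)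
            = volume ((Function.support q2 ∩ Ioc a b) ∪ (Ioc a b \ Function.support q2)) := by
              congr 1
              ext x
              by_cases hx : x ∈ Function.support q2 <;> simp [hx]
          _ ≤ volume (Function.support q2 ∩ Ioc a b) + volume (Ioc a b \ Function.support q2) :=
              measure_union_le _ _
          _ = volume (Function.support q2 ∩ Ioc a b) := by rw [hnull, add_zero]
      refine lt_of_lt_of_le ?_ hle
      rw [Real.volume_Ioc]
      exact ENNReal.ofReal_pos.mpr (by linarith)
    linarith [hFb, hposint]
  -- change of variables : F (γs t) = F t for t ∈ [0,1]
  have hFeq : ∀ t ∈ Icc (0:ℝ) 1, F (γs t) = F t := by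
    intro t ht
    have hsub01 : Icc (0:ℝ) t ⊆ Icc 0 1 := Icc_subset_Icc_right ht.2
    have himg : γs '' Icc 0 t = Icc 0 (γs t) := by
      apply Subset.antisymm
      · rintro _ ⟨s, hs, rfl⟩
        have hs01 : s ∈ Icc (0:ℝ) 1 := hsub01 hs
        constructor
        · rw [← h0]
          rcases eq_or_lt_of_le hs.1 with h | h
          · rw [h]
          · exact (hmono (left_mem_Icc.mpr zero_le_one) hs01 h).le
        · rcases eq_or_lt_of_le hs.2 with h | h
          · rw [h]
          · exact (hmono hs01 ht h).le
      · have := intermediate_value_Icc ht.1 (hγcont.mono hsub01)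
        rwa [h0] at this
    have hf' : ∀ x ∈ Icc (0:ℝ) t, HasDerivWithinAt γs (γsd x) (Icc 0 t) x :=
      fun x hx => (hderiv x (hsub01 hx)).hasDerivWithinAt
    have hinj : InjOn γs (Icc 0 t) := (hmono.injOn).mono hsub01
    have hcov := integral_image_eq_integral_abs_deriv_smul measurableSet_Icc hf' hinj q2
    rw [himg] at hcov
    rw [hF]
    simp only
    rw [hcov]
    have hae : ∀ᵐ x ∂(volume.restrict (Icc (0:ℝ) t)),
        |γsd x| • q2 (γs x) = q2 x := by
      have h1 : ∀ᵐ x ∂(volume.restrict (Icc (0:ℝ) t)),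
          q x = q (γs x) * Real.sqrt (γsd x) :=
        ae_restrict_of_ae_restrict_of_subset hsub01 hfix
      have h2 : ∀ᵐ x ∂(volume.restrict (Icc (0:ℝ) t)), x ∈ Icc (0:ℝ) t :=
        ae_restrict_mem measurableSet_Icc
      filter_upwards [h1, h2] with x hx hxm
      have hgd : 0 < γsd x := hpos x (hsub01 hxm)
      rw [hq2]
      simp only [smul_eq_mul]
      rw [hx]
      rw [mul_pow, Real.sq_sqrt hgd.le, abs_of_pos hgd]
      ring
    exact integral_congr_ae hae
  intro t ht
  exact hFmono.injOn (hmaps ht) ht (hFeq t ht)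
end

section
/- Let g be absolutely continuous on [0,1] with SRVF q_g, and let fᵢ = cᵢ(g∘γᵢ) + eᵢ for constants cᵢ > 0, eᵢ ∈ ℝ, and γᵢ ∈ Γ, i = 1,…,n. With qᵢ the SRVF of fᵢ and s̄ = (1/n)Σᵢ√(cᵢ), the orbit [s̄ q_g] minimizes [q] ↦ Σᵢ d([qᵢ],[q])² over the quotient space L²/Γ, where d([q₁],[q₂]) = inf_{γ∈Γ} ‖q₁ − (q₂,γ)‖, i.e., for every q ∈ L², Σᵢ d([qᵢ],[q])² ≥ Σᵢ ‖√(cᵢ) q_g − s̄ q_g‖². -/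
open MeasureTheory Set intervalIntegral

lemma isWarping_id : IsWarping (fun t => t) (fun _ => (1:ℝ)) :=
  ⟨rfl, rfl, fun x hx => hx, fun t _ => hasDerivAt_id t, fun _ _ => one_pos,
    continuousOn_const⟩

/-- Change of variables for a warping: `h∘γ·√γd` is in L² together with `h`, with the
same integral of the square. -/
lemma warp_L2 {h γ γd : ℝ → ℝ} (hh : MemLp h 2 (volume.restrict (Icc (0:ℝ) 1)))
    (hw : IsWarping γ γd) :
    MemLp (fun t => h (γ t) * Real.sqrt (γd t)) 2 (volume.restrict (Icc (0:ℝ) 1)) ∧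
    ∫ t in Icc (0:ℝ) 1, (h (γ t) * Real.sqrt (γd t))^2
      = ∫ t in Icc (0:ℝ) 1, (h t)^2 := by
  obtain ⟨h0, h1, hmap, hder, hpos, hcont⟩ := hw
  have hKm : MeasurableSet (Icc (0:ℝ) 1) := measurableSet_Icc
  have hcontγ : ContinuousOn γ (Icc (0:ℝ) 1) :=
    fun x hx => (hder x hx).continuousAt.continuousWithinAt
  have hmono : StrictMonoOn γ (Icc (0:ℝ) 1) := by
    apply strictMonoOn_of_deriv_pos (convex_Icc 0 1) hcontγ
    intro x hx
    rw [interior_Icc] at hx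
    rw [(hder x (Ioo_subset_Icc_self hx)).deriv]
    exact hpos x (Ioo_subset_Icc_self hx)
  have hinj : InjOn γ (Icc (0:ℝ) 1) := hmono.injOn
  have himg : γ '' Icc (0:ℝ) 1 = Icc (0:ℝ) 1 := by
    apply Subset.antisymm (MapsTo.image_subset hmap)
    have := intermediate_value_Icc (zero_le_one) hcontγ
    rwa [h0, h1] at this
  have hderW : ∀ x ∈ Icc (0:ℝ) 1, HasDerivWithinAt γ (γd x) (Icc (0:ℝ) 1) x :=
    fun x hx => (hder x hx).hasDerivWithinAt
  have hEq : EqOn (fun x => |γd x| • (h (γ x))^2)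
      (fun x => (h (γ x) * Real.sqrt (γd x))^2) (Icc (0:ℝ) 1) := by
    intro x hx
    have hp := hpos x hx
    simp only [smul_eq_mul, abs_of_pos hp, mul_pow, Real.sq_sqrt hp.le]
    ring
  have hchg : ∫ t in Icc (0:ℝ) 1, (h t)^2
      = ∫ t in Icc (0:ℝ) 1, |γd t| • (h (γ t))^2 := by
    have := integral_image_eq_integral_abs_deriv_smul hKm hderW hinj (fun y => (h y)^2)
    rwa [himg] at this
  have hint : ∫ t in Icc (0:ℝ) 1, (h (γ t) * Real.sqrt (γd t))^2
      = ∫ t in Icc (0:ℝ) 1, (h t)^2 := by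
    rw [hchg]
    exact (setIntegral_congr_fun hKm hEq).symm
  have hsq : IntegrableOn (fun x => (h x)^2) (Icc (0:ℝ) 1) := hh.integrable_sq
  have hsq' : IntegrableOn (fun x => |γd x| • (h (γ x))^2) (Icc (0:ℝ) 1) := by
    have := integrableOn_image_iff_integrableOn_abs_deriv_smul hKm hderW hinj
      (fun y => (h y)^2)
    rw [himg] at this
    exact this.1 hsq
  have hsqw : IntegrableOn (fun t => (h (γ t) * Real.sqrt (γd t))^2) (Icc (0:ℝ) 1) :=
    hsq'.congr_fun hEq hKm
  haveI : IsFiniteMeasure (volume.restrict (Icc (0:ℝ) 1)) :=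
    ⟨by rw [Measure.restrict_apply_univ]; exact measure_Icc_lt_top⟩
  have hInt1 : IntegrableOn h (Icc (0:ℝ) 1) := hh.integrable one_le_two
  have hz : IntegrableOn (fun x => |γd x| • h (γ x)) (Icc (0:ℝ) 1) := by
    have := integrableOn_image_iff_integrableOn_abs_deriv_smul hKm hderW hinj h
    rw [himg] at this
    exact this.1 hInt1
  have hφ : AEStronglyMeasurable (fun x => Real.sqrt (γd x) / γd x)
      (volume.restrict (Icc (0:ℝ) 1)) :=
    ContinuousOn.aestronglyMeasurable
      ((hcont.sqrt).div hcont (fun x hx => (hpos x hx).ne')) hKm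
  have hAESM : AEStronglyMeasurable (fun t => h (γ t) * Real.sqrt (γd t))
      (volume.restrict (Icc (0:ℝ) 1)) := by
    apply (hz.1.mul hφ).congr
    filter_upwards [ae_restrict_mem hKm] with x hx
    have hp := hpos x hx
    show |γd x| • h (γ x) * (Real.sqrt (γd x) / γd x) = h (γ x) * Real.sqrt (γd x)
    rw [smul_eq_mul, abs_of_pos hp]
    field_simp
  exact ⟨(memLp_two_iff_integrable_sq hAESM).2 hsqw, hint⟩

/-- Consistency of the Karcher mean (Theorem 1): let `g` have SRVF `q_g` and let
`fᵢ = cᵢ (g ∘ γᵢ) + eᵢ` with `cᵢ > 0`, so that the SRVF of `fᵢ` is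
`qᵢ = √cᵢ (q_g ∘ γᵢ) √(γᵢ')`. With `s̄ = (1/n) Σᵢ √cᵢ`, the orbit `[s̄ q_g]` minimizes
`[q] ↦ Σᵢ d([qᵢ],[q])²` where `d([q₁],[q₂]) = inf_γ ‖q₁ − (q₂,γ)‖`: for every `q ∈ L²`,
`Σᵢ d([qᵢ],[q])² ≥ Σᵢ ‖√cᵢ q_g − s̄ q_g‖²` (squared distances expressed as infima of
squared norms). -/
theorem karcher_mean_of_warped_signals (n : ℕ) (hn : 0 < n)
    (g q_g : ℝ → ℝ) (hqg : MemLp q_g 2 (volume.restrict (Icc (0:ℝ) 1)))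
    (c : Fin n → ℝ) (hc : ∀ i, 0 < c i) (e : Fin n → ℝ)
    (γ γd : Fin n → ℝ → ℝ) (hγ : ∀ i, IsWarping (γ i) (γd i))
    (f : Fin n → ℝ → ℝ) (hf : ∀ i, f i = fun t => c i * g (γ i t) + e i)
    (q : Fin n → ℝ → ℝ)
    (hq : ∀ i, ∀ t ∈ Icc (0:ℝ) 1,
      q i t = Real.sqrt (c i) * (q_g (γ i t) * Real.sqrt (γd i t)))
    (sbar : ℝ) (hsbar : sbar = (∑ i, Real.sqrt (c i)) / n) :
    ∀ qf : ℝ → ℝ, MemLp qf 2 (volume.restrict (Icc (0:ℝ) 1)) →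
      ∑ i, sInf {r : ℝ | ∃ δ δd : ℝ → ℝ, IsWarping δ δd ∧
          r = ∫ t in (0:ℝ)..1, (q i t - qf (δ t) * Real.sqrt (δd t))^2}
        ≥ ∑ i, ∫ t in (0:ℝ)..1, (Real.sqrt (c i) * q_g t - sbar * q_g t)^2 := by
  intro qf hqf
  haveI : Nonempty (Fin n) := ⟨⟨0, hn⟩⟩
  set A := ∫ t in Icc (0:ℝ) 1, (q_g t)^2 with hA
  set C := ∫ t in Icc (0:ℝ) 1, (qf t)^2 with hC
  have hn' : (0:ℝ) < n := by exact_mod_cast hn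
  have hsbar_pos : 0 < sbar := by
    rw [hsbar]
    apply div_pos _ hn'
    exact Finset.sum_pos (fun i _ => Real.sqrt_pos.2 (hc i)) Finset.univ_nonempty
  have hsne : sbar ≠ 0 := hsbar_pos.ne'
  have hsum : ∑ i, Real.sqrt (c i) = n * sbar := by
    rw [hsbar]; field_simp
  -- the per-i lower bound on each infimum
  have key : ∀ i : Fin n,
      (c i - Real.sqrt (c i) * sbar) * A + (1 - Real.sqrt (c i) / sbar) * C ≤
      sInf {r : ℝ | ∃ δ δd : ℝ → ℝ, IsWarping δ δd ∧
          r = ∫ t in (0:ℝ)..1, (q i t - qf (δ t) * Real.sqrt (δd t))^2} := by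
    intro i
    obtain ⟨hw_mem, hw_int⟩ := warp_L2 hqg (hγ i)
    set w : ℝ → ℝ := fun t => q_g (γ i t) * Real.sqrt (γd i t) with hwdef
    set a : ℝ := Real.sqrt (c i) with hadef
    have ha : 0 < a := Real.sqrt_pos.2 (hc i)
    have ha2 : a ^ 2 = c i := Real.sq_sqrt (hc i).le
    apply le_csInf
    · exact ⟨_, (fun t => t), (fun _ => (1:ℝ)), isWarping_id, rfl⟩
    rintro r ⟨δ, δd, hδ, rfl⟩
    obtain ⟨hv_mem, hv_int⟩ := warp_L2 hqf hδ
    set v : ℝ → ℝ := fun t => qf (δ t) * Real.sqrt (δd t) with hvdef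
    have step1 : ∫ t in (0:ℝ)..1, (q i t - v t)^2
        = ∫ t in Icc (0:ℝ) 1, (a * w t - v t)^2 := by
      rw [intervalIntegral.integral_of_le zero_le_one,
        MeasureTheory.integral_Icc_eq_integral_Ioc]
      apply setIntegral_congr_fun measurableSet_Ioc
      intro t ht
      show (q i t - v t)^2 = (a * w t - v t)^2
      rw [hq i t (Ioc_subset_Icc_self ht)]
    have hid : ∀ t : ℝ, (a * w t - v t)^2
        = (a / sbar) * (sbar * w t - v t)^2
          + ((a^2 - a * sbar) * (w t)^2 + (1 - a / sbar) * (v t)^2) := by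
      intro t
      field_simp
      ring
    have hw2 : Integrable (fun t => (w t)^2) (volume.restrict (Icc (0:ℝ) 1)) :=
      hw_mem.integrable_sq
    have hv2 : Integrable (fun t => (v t)^2) (volume.restrict (Icc (0:ℝ) 1)) :=
      hv_mem.integrable_sq
    have hsv2 : Integrable (fun t => (sbar * w t - v t)^2)
        (volume.restrict (Icc (0:ℝ) 1)) :=
      ((hw_mem.const_mul sbar).sub hv_mem).integrable_sq
    have split : ∫ t in Icc (0:ℝ) 1, (a * w t - v t)^2
        = (a / sbar) * (∫ t in Icc (0:ℝ) 1, (sbar * w t - v t)^2)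
          + ((a^2 - a * sbar) * A + (1 - a / sbar) * C) := by
      simp_rw [hid]
      have i1 : Integrable (fun t => a / sbar * (sbar * w t - v t) ^ 2)
          (volume.restrict (Icc (0:ℝ) 1)) := hsv2.const_mul _
      have i3 : Integrable (fun t => (a^2 - a * sbar) * (w t)^2)
          (volume.restrict (Icc (0:ℝ) 1)) := hw2.const_mul _
      have i4 : Integrable (fun t => (1 - a / sbar) * (v t)^2)
          (volume.restrict (Icc (0:ℝ) 1)) := hv2.const_mul _
      have i2 : Integrable
          (fun t => (a^2 - a * sbar) * (w t)^2 + (1 - a / sbar) * (v t)^2)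
          (volume.restrict (Icc (0:ℝ) 1)) := i3.add i4
      rw [integral_add i1 i2, integral_add i3 i4,
        MeasureTheory.integral_const_mul, MeasureTheory.integral_const_mul,
        MeasureTheory.integral_const_mul, hw_int, hv_int]
    have hnn : 0 ≤ ∫ t in Icc (0:ℝ) 1, (sbar * w t - v t)^2 :=
      setIntegral_nonneg measurableSet_Icc (fun t _ => sq_nonneg _)
    rw [step1, split, ha2]
    have : 0 ≤ (a / sbar) * (∫ t in Icc (0:ℝ) 1, (sbar * w t - v t)^2) :=
      mul_nonneg (div_nonneg ha.le hsbar_pos.le) hnn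
    linarith
  -- evaluation of the right-hand side integrals
  have hRHS : ∀ i : Fin n,
      ∫ t in (0:ℝ)..1, (Real.sqrt (c i) * q_g t - sbar * q_g t)^2
        = (Real.sqrt (c i) - sbar)^2 * A := by
    intro i
    rw [intervalIntegral.integral_of_le zero_le_one]
    have : (fun t => (Real.sqrt (c i) * q_g t - sbar * q_g t)^2)
        = fun t => (Real.sqrt (c i) - sbar)^2 * (q_g t)^2 := funext fun t => by ring
    rw [this, MeasureTheory.integral_const_mul, hA, MeasureTheory.integral_Icc_eq_integral_Ioc]
  -- summation
  have hsum_eq : ∑ i, (Real.sqrt (c i) - sbar)^2 * A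
      = ∑ i, ((c i - Real.sqrt (c i) * sbar) * A + (1 - Real.sqrt (c i) / sbar) * C) := by
    have expand : ∀ i : Fin n, (Real.sqrt (c i) - sbar)^2 * A
        = ((c i - Real.sqrt (c i) * sbar) * A + (1 - Real.sqrt (c i) / sbar) * C)
          + (sbar * A - C / sbar) * (sbar - Real.sqrt (c i)) := by
      intro i
      have h2 : Real.sqrt (c i) ^ 2 = c i := Real.sq_sqrt (hc i).le
      rw [← h2]
      field_simp
      rw [Real.sqrt_sq (Real.sqrt_nonneg _)]
      ring
    rw [Finset.sum_congr rfl (fun i _ => expand i), Finset.sum_add_distrib]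
    have : ∑ i : Fin n, (sbar * A - C / sbar) * (sbar - Real.sqrt (c i)) = 0 := by
      rw [← Finset.mul_sum, Finset.sum_sub_distrib, Finset.sum_const, hsum]
      simp [Finset.card_univ]
    rw [this, add_zero]
  rw [ge_iff_le, Finset.sum_congr rfl (fun i _ => hRHS i), hsum_eq]
  exact Finset.sum_le_sum (fun i _ => key i)
end
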